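/- Let s ≥ 1 and N = (s+1)(s+2)/2, let c ∈ ℝ^s have all entries nonzero, and let h₁,…,h_K ∈ ℝ[z₁,…,z_s] with each h_k of the form h_k(z) = z_{a_k} z_{b_k} − c_{a_k} c_{b_k} for indices a_k, b_k ∈ {0,1,…,s} (with the convention z₀ := 1 and c₀ := 1). Suppose that for each i ∈ {1,…,s} there exist polynomials λ^{(i)}₁,…,λ^{(i)}_K of total degree at most 1 with z_i − c_i = Σ_{k=1}^K λ^{(i)}_k h_k. Then there exists a positive semidefinite matrix U ∈ ℝ^{KN×KN} such that for all z ∈ ℝ^s: Σ_{i=1}^s (z_i − c_i)² + Σ_{1 ≤ i ≤ j ≤ s} (z_i z_j − c_i c_j)² = (h(z) ⊗ u₂(z))ᵀ U (h(z) ⊗ u₂(z)). -/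

import Mathlib

open Matrix

noncomputable section

/-- Index set for the monomials of degree at most `2` in `s` variables: pairs
`(i, j)` with `i ≤ j` in `Fin (s+1)`, where index `0` stands for the constant `1`.
Its cardinality is `N = (s+1)(s+2)/2`. -/
abbrev MonIdx (s : ℕ) := {p : Fin (s + 1) × Fin (s + 1) // p.1 ≤ p.2}

/-- The index of the constant monomial `1` (the "first" entry of `u₂`). -/
def idx1 (s : ℕ) : MonIdx s := ⟨(0, 0), le_refl _⟩

/-- Extended variable vector: `extv z 0 = 1` and `extv z (i+1) = z i`. -/
def extv {s : ℕ} (z : Fin s → ℝ) : Fin (s + 1) → ℝ := Fin.cons 1 z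

/-- `u₂ z` : the vector of all monomials of degree at most `2` in `z`;
its entry at `⟨(i, j), _⟩` is `z_i z_j` (with the convention `z_0 = 1`). -/
def u2 {s : ℕ} (z : Fin s → ℝ) : MonIdx s → ℝ := fun p => extv z p.1.1 * extv z p.1.2

/-- `E^r` : the diagonal matrix whose `(r, r)` entry is `1` and all others are `0`. -/
def Emat {s : ℕ} (r : MonIdx s) : Matrix (MonIdx s) (MonIdx s) ℝ :=
  Matrix.single r r 1

/-- `Q^r` : the symmetric matrix whose only nonzero entries are
`[Q^r]₁₁ = ((u₂ z₀)ᵣ)²`, `[Q^r]₁ᵣ = [Q^r]ᵣ₁ = -(u₂ z₀)ᵣ` and `[Q^r]ᵣᵣ = 1`. -/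
def Qmat {s : ℕ} (z₀ : Fin s → ℝ) (r : MonIdx s) : Matrix (MonIdx s) (MonIdx s) ℝ :=
  Matrix.single (idx1 s) (idx1 s) ((u2 z₀ r) ^ 2)
    + Matrix.single (idx1 s) r (-(u2 z₀ r))
    + Matrix.single r (idx1 s) (-(u2 z₀ r))
    + Matrix.single r r 1

/-- Kronecker product of two vectors: `(v ⊗ u)_{(k,t)} = v_k u_t`. -/
def kron {K N : Type*} (v : K → ℝ) (u : N → ℝ) : K × N → ℝ := fun p => v p.1 * u p.2
lemma mon_case {s : ℕ} (d : Fin s →₀ ℕ) (hd : (d.sum fun _ n => n) ≤ 2) :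
    ∃ t : MonIdx s, ∀ z : Fin s → ℝ, (∏ i, z i ^ d i) = u2 z t := by
  classical
  have hsum : (d.sum fun _ n => n) = ∑ i ∈ d.support, d i := rfl
  have hprod : ∀ z : Fin s → ℝ, (∏ i, z i ^ d i) = ∏ i ∈ d.support, z i ^ d i := by
    intro z
    refine (Finset.prod_subset (Finset.subset_univ _) fun x _ hx => ?_).symm
    simp [Finsupp.notMem_support_iff.mp hx]
  have hcard : d.support.card ≤ 2 := by
    calc d.support.card = ∑ _i ∈ d.support, 1 := by simp
    _ ≤ ∑ i ∈ d.support, d i := Finset.sum_le_sum fun i hi =>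
        Nat.one_le_iff_ne_zero.mpr (Finsupp.mem_support_iff.mp hi)
    _ ≤ 2 := hsum ▸ hd
  interval_cases hcc : d.support.card
  · have : d = 0 := Finsupp.support_eq_empty.mp (Finset.card_eq_zero.mp hcc)
    exact ⟨idx1 s, fun z => by simp [this, u2, idx1, extv]⟩
  · obtain ⟨i, hi⟩ := Finset.card_eq_one.mp hcc
    have hdi : d i ≠ 0 := Finsupp.mem_support_iff.mp (hi ▸ Finset.mem_singleton_self i)
    have hdile : d i ≤ 2 := by
      have : d i ≤ ∑ j ∈ d.support, d j := Finset.single_le_sum (fun _ _ => Nat.zero_le _)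
        (Finsupp.mem_support_iff.mpr hdi)
      omega
    have hp : ∀ z : Fin s → ℝ, (∏ j, z j ^ d j) = z i ^ d i := by
      intro z; rw [hprod, hi, Finset.prod_singleton]
    have h12 : d i = 1 ∨ d i = 2 := by omega
    rcases h12 with hdd | hdd
    · exact ⟨⟨(0, i.succ), Fin.zero_le _⟩, fun z => by
        rw [hp]; simp [u2, extv, hdd]⟩
    · exact ⟨⟨(i.succ, i.succ), le_rfl⟩, fun z => by
        rw [hp]; simp [u2, extv, hdd]; ring⟩
  · obtain ⟨i, j, hij, hsupp⟩ := Finset.card_eq_two.mp hcc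
    have hdi : d i ≠ 0 := Finsupp.mem_support_iff.mp (by rw [hsupp]; simp)
    have hdj : d j ≠ 0 := Finsupp.mem_support_iff.mp (by rw [hsupp]; simp)
    have hsum2 : d i + d j ≤ 2 := by
      have : ∑ k ∈ d.support, d k ≤ 2 := hsum ▸ hd
      rwa [hsupp, Finset.sum_pair hij] at this
    have hdi1 : d i = 1 := by omega
    have hdj1 : d j = 1 := by omega
    have hp : ∀ z : Fin s → ℝ, (∏ k, z k ^ d k) = z i * z j := by
      intro z; rw [hprod, hsupp, Finset.prod_pair hij, hdi1, hdj1]; ring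
    rcases le_total i j with hle | hle
    · exact ⟨⟨(i.succ, j.succ), Fin.succ_le_succ_iff.mpr hle⟩, fun z => by
        rw [hp]; simp [u2, extv]⟩
    · exact ⟨⟨(j.succ, i.succ), Fin.succ_le_succ_iff.mpr hle⟩, fun z => by
        rw [hp]; simp [u2, extv]; ring⟩

lemma u2_repr {s : ℕ} (p : MvPolynomial (Fin s) ℝ) (hp : p.totalDegree ≤ 2) :
    ∃ v : MonIdx s → ℝ, ∀ z : Fin s → ℝ, MvPolynomial.eval z p = ∑ t, v t * u2 z t := by
  classical
  have hT : ∀ d : p.support, ∃ t : MonIdx s, ∀ z : Fin s → ℝ,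
      (∏ i, z i ^ (d : Fin s →₀ ℕ) i) = u2 z t := fun d =>
    mon_case d.1 ((MvPolynomial.le_totalDegree d.2).trans hp)
  choose T hT' using hT
  refine ⟨fun t => ∑ d ∈ p.support.attach, if T d = t then p.coeff d.1 else 0, fun z => ?_⟩
  rw [MvPolynomial.eval_eq']
  rw [← Finset.sum_attach p.support fun d => p.coeff d * ∏ i, z i ^ d i]
  calc ∑ d ∈ p.support.attach, p.coeff d.1 * ∏ i, z i ^ (d : Fin s →₀ ℕ) i
      = ∑ d ∈ p.support.attach, p.coeff d.1 * u2 z (T d) := by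
        refine Finset.sum_congr rfl fun d _ => by rw [hT' d z]
    _ = ∑ d ∈ p.support.attach, ∑ t, (if T d = t then p.coeff d.1 else 0) * u2 z t := by
        refine Finset.sum_congr rfl fun d _ => ?_
        simp [ite_mul]
    _ = ∑ t, (∑ d ∈ p.support.attach, if T d = t then p.coeff d.1 else 0) * u2 z t := by
        rw [Finset.sum_comm]
        exact Finset.sum_congr rfl fun t _ => (Finset.sum_mul _ _ _).symm

lemma repr_kron {s K : ℕ} (h : Fin K → MvPolynomial (Fin s) ℝ)
    (μ : Fin K → MvPolynomial (Fin s) ℝ) (hμ : ∀ k, (μ k).totalDegree ≤ 2) :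
    ∃ w : Fin K × MonIdx s → ℝ, ∀ z : Fin s → ℝ,
      MvPolynomial.eval z (∑ k, μ k * h k) =
        w ⬝ᵥ kron (fun k => MvPolynomial.eval z (h k)) (u2 z) := by
  choose v hv using fun k => u2_repr (μ k) (hμ k)
  refine ⟨fun q => v q.1 q.2, fun z => ?_⟩
  simp only [dotProduct, kron, Fintype.sum_prod_type, map_sum, _root_.map_mul]
  refine Finset.sum_congr rfl fun k _ => ?_
  rw [hv k z, Finset.sum_mul]
  exact Finset.sum_congr rfl fun t _ => by ring

lemma dot_sum_mulVec {n ι : Type*} [Fintype n] (M : ι → Matrix n n ℝ) (x : n → ℝ)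
    (s : Finset ι) :
    x ⬝ᵥ ((∑ i ∈ s, M i) *ᵥ x) = ∑ i ∈ s, x ⬝ᵥ (M i *ᵥ x) := by
  classical
  induction s using Finset.induction_on with
  | empty => simp
  | insert _ _ hns ih =>
      rw [Finset.sum_insert hns, Finset.sum_insert hns, Matrix.add_mulVec, dotProduct_add, ih]

lemma quad_vecMulVec {n : Type*} [Fintype n] (a x : n → ℝ) :
    x ⬝ᵥ (Matrix.vecMulVec a a *ᵥ x) = (a ⬝ᵥ x) ^ 2 := by
  simp only [Matrix.mulVec, Matrix.vecMulVec, dotProduct, Matrix.of_apply, Finset.mul_sum]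
  rw [sq, Finset.sum_mul_sum]
  exact Finset.sum_congr rfl fun i _ => Finset.sum_congr rfl fun j _ => by ring

lemma sos_psd {n : Type*} [Fintype n] [DecidableEq n] {ι : Type*} [Fintype ι]
    (g : ι → n → ℝ) :
    ∃ U : Matrix n n ℝ, U.PosSemidef ∧
      ∀ x : n → ℝ, (∑ i, (g i ⬝ᵥ x) ^ 2) = x ⬝ᵥ (U *ᵥ x) := by
  refine ⟨∑ i, Matrix.vecMulVec (g i) (g i), ?_, ?_⟩
  · refine Matrix.posSemidef_iff_dotProduct_mulVec.mpr ⟨?_, ?_⟩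
    · unfold Matrix.IsHermitian
      rw [conjTranspose_sum]
      refine Finset.sum_congr rfl fun i _ => ?_
      ext a b; simp [Matrix.vecMulVec, mul_comm]
    · intro x
      simp only [star_trivial]
      rw [dot_sum_mulVec]
      refine Finset.sum_nonneg fun i _ => ?_
      rw [quad_vecMulVec]; positivity
  · intro x
    rw [dot_sum_mulVec]
    exact Finset.sum_congr rfl fun i _ => (quad_vecMulVec (g i) x).symm
/-- Extended polynomial variables: `Xe 0 = 1` and `Xe (i+1) = X i`
(the convention `z₀ := 1`). -/
def Xe {s : ℕ} : Fin (s + 1) → MvPolynomial (Fin s) ℝ := Fin.cons 1 MvPolynomial.X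

/-- Extended constants: `ce c 0 = 1` and `ce c (i+1) = c i` (the convention `c₀ := 1`). -/
def ce {s : ℕ} (c : Fin s → ℝ) : Fin (s + 1) → ℝ := Fin.cons 1 c

/-- under the hypotheses of STATEMENT 10 there is a positive semidefinite
`U ∈ ℝ^{KN×KN}` with
`Σ_i (z_i − c_i)² + Σ_{i ≤ j} (z_i z_j − c_i c_j)² = (h(z) ⊗ u₂(z))ᵀ U (h(z) ⊗ u₂(z))`. -/
theorem stmt12 (s : ℕ) (hs : 1 ≤ s) (c : Fin s → ℝ) (hc : ∀ i, c i ≠ 0)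
    (K : ℕ) (h : Fin K → MvPolynomial (Fin s) ℝ) (a b : Fin K → Fin (s + 1))
    (hform : ∀ k, h k = Xe (a k) * Xe (b k) - MvPolynomial.C (ce c (a k) * ce c (b k)))
    (hlam : ∀ i : Fin s, ∃ lam : Fin K → MvPolynomial (Fin s) ℝ,
        (∀ k, (lam k).totalDegree ≤ 1) ∧
        MvPolynomial.X i - MvPolynomial.C (c i) = ∑ k, lam k * h k) :
    ∃ U : Matrix (Fin K × MonIdx s) (Fin K × MonIdx s) ℝ, U.PosSemidef ∧
      ∀ z : Fin s → ℝ,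
        (∑ i, (z i - c i) ^ 2) +
            (∑ p ∈ Finset.univ.filter (fun p : Fin s × Fin s => p.1 ≤ p.2),
              (z p.1 * z p.2 - c p.1 * c p.2) ^ 2) =
          kron (fun k => MvPolynomial.eval z (h k)) (u2 z) ⬝ᵥ
            (U *ᵥ kron (fun k => MvPolynomial.eval z (h k)) (u2 z)) := by
  classical
  choose lam hdeg hsum using hlam
  have hw1 : ∀ i : Fin s, ∃ w : Fin K × MonIdx s → ℝ, ∀ z : Fin s → ℝ,
      z i - c i = w ⬝ᵥ kron (fun k => MvPolynomial.eval z (h k)) (u2 z) := by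
    intro i
    obtain ⟨w, hw⟩ := repr_kron h (lam i) (fun k => (hdeg i k).trans one_le_two)
    refine ⟨w, fun z => ?_⟩
    have := hw z
    rw [← hsum i] at this
    simpa using this
  have hw2 : ∀ i j : Fin s, ∃ w : Fin K × MonIdx s → ℝ, ∀ z : Fin s → ℝ,
      z i * z j - c i * c j = w ⬝ᵥ kron (fun k => MvPolynomial.eval z (h k)) (u2 z) := by
    intro i j
    set μ : Fin K → MvPolynomial (Fin s) ℝ :=
      fun k => MvPolynomial.X i * lam j k + MvPolynomial.C (c j) * lam i k with hμdef
    have hdegμ : ∀ k, (μ k).totalDegree ≤ 2 := by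
      intro k
      refine (MvPolynomial.totalDegree_add _ _).trans (max_le ?_ ?_)
      · refine (MvPolynomial.totalDegree_mul _ _).trans ?_
        have := hdeg j k
        rw [MvPolynomial.totalDegree_X]
        omega
      · refine (MvPolynomial.totalDegree_mul _ _).trans ?_
        have := hdeg i k
        rw [MvPolynomial.totalDegree_C]
        omega
    have hsum2 : (∑ k, μ k * h k) =
        MvPolynomial.X i * MvPolynomial.X j - MvPolynomial.C (c i * c j) := by
      calc ∑ k, μ k * h k
          = MvPolynomial.X i * ∑ k, lam j k * h k
            + MvPolynomial.C (c j) * ∑ k, lam i k * h k := by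
            rw [Finset.mul_sum, Finset.mul_sum, ← Finset.sum_add_distrib]
            exact Finset.sum_congr rfl fun k _ => by ring
        _ = _ := by
            rw [← hsum i, ← hsum j, MvPolynomial.C_mul]
            ring
    obtain ⟨w, hw⟩ := repr_kron h μ hdegμ
    refine ⟨w, fun z => ?_⟩
    have := hw z
    rw [hsum2] at this
    simpa using this
  choose w1 hw1' using hw1
  choose w2 hw2' using hw2
  set S := Finset.univ.filter (fun p : Fin s × Fin s => p.1 ≤ p.2) with hS
  obtain ⟨U, hU, hq⟩ := sos_psd (n := Fin K × MonIdx s)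
    (ι := Fin s ⊕ {p // p ∈ S})
    (Sum.elim w1 (fun q => w2 q.1.1 q.1.2))
  refine ⟨U, hU, fun z => ?_⟩
  rw [← hq (kron (fun k => MvPolynomial.eval z (h k)) (u2 z)), Fintype.sum_sum_type]
  congr 1
  · exact Finset.sum_congr rfl fun i _ => by rw [hw1' i z]; rfl
  · rw [← Finset.sum_coe_sort S (fun p => (z p.1 * z p.2 - c p.1 * c p.2) ^ 2)]
    exact Finset.sum_congr rfl fun q _ => by rw [hw2' q.1.1 q.1.2 z]; rfl
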